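/- Let α = [0; a_1, ..., a_n, ...] be an irrational number whose partial quotients are all bounded by some constant c. Then there exists a doubly infinite sequence B = (..., b_{-1}, b_0, b_1, ...) of positive integers strongly associated with α, i.e., (i) for every i ≥ 1 the pattern (b_{-i}, ..., b_0, ..., b_i) occurs infinitely often in (a_1, a_2, ...), and (ii) μ(α) = λ_0(B) = M(B). -/

import Mathlib

open Filter

/-- Numerators of the convergents of the continued fraction `[a 0; a 1, a 2, ...]`. -/
def cfNum (a : ℕ → ℤ) : ℕ → ℤ
  | 0 => a 0
  | 1 => a 1 * a 0 + 1
  | n + 2 => a (n + 2) * cfNum a (n + 1) + cfNum a n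

/-- Denominators of the convergents of the continued fraction `[a 0; a 1, a 2, ...]`. -/
def cfDen (a : ℕ → ℤ) : ℕ → ℤ
  | 0 => 1
  | 1 => a 1
  | n + 2 => a (n + 2) * cfDen a (n + 1) + cfDen a n

/-- Value of the infinite continued fraction `[a 0; a 1, a 2, ...]`, as the limit of
its convergents. -/
noncomputable def cfVal (a : ℕ → ℤ) : ℝ :=
  limUnder atTop fun n => (cfNum a n : ℝ) / (cfDen a n : ℝ)

/-- Value of the infinite continued fraction `[0; s 0, s 1, s 2, ...]`. -/
noncomputable def cfZero (s : ℕ → ℤ) : ℝ :=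
  cfVal fun n => if n = 0 then 0 else s (n - 1)

/-- Value of the finite continued fraction `[0; l]`. -/
noncomputable def cfFin : List ℤ → ℝ
  | [] => 0
  | x :: xs => 1 / ((x : ℝ) + cfFin xs)

/-- `λ_i(α) = [a_i; a_{i+1}, ...] + [0; a_{i-1}, ..., a_1]` for `α = [a 0; a 1, a 2, ...]`. -/
noncomputable def lambdaCF (a : ℕ → ℤ) (i : ℕ) : ℝ :=
  cfVal (fun n => a (i + n)) + cfFin ((List.range (i - 1)).map fun j => a (i - 1 - j))

/-- `λ_i(B) = [b_i; b_{i-1}, ...] + [0; b_{i+1}, ...]` for a doubly infinite sequence. -/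
noncomputable def lambdaZ (b : ℤ → ℤ) (i : ℤ) : ℝ :=
  cfVal (fun n => b (i - n)) + cfVal fun n => if n = 0 then 0 else b (i + n)

/-- `M(B) = sup_i λ_i(B)`. -/
noncomputable def MZ (b : ℤ → ℤ) : ℝ := ⨆ i : ℤ, lambdaZ b i

/-- The Lagrange constant `μ(α)`, defined by
`μ(α)⁻¹ = liminf_{p ∈ ℤ, q ∈ ℕ} |q (q α - p)|`. -/
noncomputable def lagrangeConst (α : ℝ) : ℝ :=
  (liminf (fun q : ℕ => ⨅ p : ℤ, |(q : ℝ) * ((q : ℝ) * α - (p : ℝ))|) atTop)⁻¹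

/-- `α` is attainable: `|α - p/q| ≤ 1/(μ(α) q²)` has infinitely many integer solutions. -/
def Attainable (α : ℝ) : Prop :=
  {pq : ℤ × ℤ | 0 < pq.2 ∧
    |α - (pq.1 : ℝ) / (pq.2 : ℝ)| ≤ 1 / (lagrangeConst α * (pq.2 : ℝ) ^ 2)}.Infinite

/-- The Lagrange spectrum: the set of values of `μ(α)` over irrational `α`. -/
def LagrangeSpectrum : Set ℝ := {x | ∃ α : ℝ, Irrational α ∧ lagrangeConst α = x}

/-- The doubly infinite sequence `b` is weakly associated with the number whose partial
quotients are `a 1, a 2, ...`: every central pattern `(b_{-i}, ..., b_i)` occurs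
infinitely often in `(a 1, a 2, ...)`. -/
def WeaklyAssoc (b : ℤ → ℤ) (a : ℕ → ℤ) : Prop :=
  ∀ i : ℕ, ∃ᶠ k in atTop, ∀ j : ℕ, j ≤ 2 * i → a (k + 1 + j) = b ((j : ℤ) - (i : ℤ))



namespace CFAux

/-- entries from index 1 on are at least 1 -/
def Pos1 (s : ℕ → ℤ) : Prop := ∀ n, 1 ≤ n → 1 ≤ s n

/-- the shift -/
def sh (s : ℕ → ℤ) : ℕ → ℤ := fun n => s (n + 1)

lemma pos1_sh {s : ℕ → ℤ} (hs : Pos1 s) (h1 : 1 ≤ s 1) : Pos1 (sh s) := by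
  intro n hn; exact hs (n+1) (by omega)

lemma cfNum_rec (s : ℕ → ℤ) (n : ℕ) :
    cfNum s (n + 2) = s (n + 2) * cfNum s (n + 1) + cfNum s n := rfl

lemma cfDen_rec (s : ℕ → ℤ) (n : ℕ) :
    cfDen s (n + 2) = s (n + 2) * cfDen s (n + 1) + cfDen s n := rfl

lemma den_pos {s : ℕ → ℤ} (hs : Pos1 s) : ∀ n, 1 ≤ cfDen s n := by
  intro n
  induction n using Nat.strong_induction_on with
  | _ n ih =>
    match n with
    | 0 => simp [cfDen]
    | 1 => exact hs 1 le_rfl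
    | n + 2 =>
      have h1 := ih (n+1) (by omega)
      have h0 := ih n (by omega)
      have := hs (n+2) (by omega)
      rw [cfDen_rec]; nlinarith

lemma den_mono {s : ℕ → ℤ} (hs : Pos1 s) : ∀ n, cfDen s n ≤ cfDen s (n + 1) := by
  intro n
  match n with
  | 0 => simpa [cfDen] using hs 1 le_rfl
  | n + 1 =>
    have h1 := den_pos hs (n+1)
    have h0 := den_pos hs n
    have := hs (n+2) (by omega)
    rw [cfDen_rec]; nlinarith

lemma den_mono_le {s : ℕ → ℤ} (hs : Pos1 s) {m n : ℕ} (h : m ≤ n) :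
    cfDen s m ≤ cfDen s n := by
  induction n with
  | zero => simpa [Nat.le_zero.mp h]
  | succ n ih =>
    rcases Nat.lt_or_ge m (n+1) with h' | h'
    · exact le_trans (ih (by omega)) (den_mono hs n)
    · have : m = n + 1 := by omega
      simp [this]

lemma den_prod {s : ℕ → ℤ} (hs : Pos1 s) : ∀ n, 2 ^ n ≤ cfDen s n * cfDen s (n + 1) := by
  intro n
  induction n with
  | zero => simpa [cfDen] using hs 1 le_rfl
  | succ n ih =>
    have h1 := den_pos hs (n+1)
    have h0 := den_pos hs n
    have h2 := hs (n+2) (by omega)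
    have hm := den_mono hs n
    have : 2 * (cfDen s n * cfDen s (n+1)) ≤ cfDen s (n+1) * cfDen s (n+2) := by
      rw [cfDen_rec]
      have k1 : cfDen s n * cfDen s (n+1) ≤ cfDen s (n+1) * cfDen s (n+1) :=
        mul_le_mul_of_nonneg_right hm (by linarith)
      have k2 : cfDen s (n+1) * cfDen s (n+1) ≤ s (n+2) * (cfDen s (n+1) * cfDen s (n+1)) :=
        le_mul_of_one_le_left (by nlinarith) h2
      nlinarith
    calc (2:ℤ)^(n+1) = 2 * 2^n := by ring
    _ ≤ 2 * (cfDen s n * cfDen s (n+1)) := by linarith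
    _ ≤ _ := this

lemma den_unbounded {s : ℕ → ℤ} (hs : Pos1 s) : ∀ M : ℤ, ∃ n : ℕ, M < cfDen s n := by
  have key : ∀ k : ℕ, (k : ℤ) + 1 ≤ cfDen s (2 * k) := by
    intro k
    induction k with
    | zero => simp [cfDen]
    | succ k ih =>
      have h1 := den_pos hs (2*k+1)
      have h0 := den_pos hs (2*k)
      have h2 := hs (2*k+2) (by omega)
      have e : 2 * (k+1) = (2*k) + 2 := by ring
      rw [e, cfDen_rec]
      have : cfDen s (2*k) ≤ cfDen s (2*k+1) := den_mono hs _
      push_cast; nlinarith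
  intro M
  refine ⟨2 * M.toNat, ?_⟩
  have h1 := key M.toNat
  have h2 : M ≤ (M.toNat : ℤ) := Int.self_le_toNat M
  omega

lemma det (s : ℕ → ℤ) : ∀ n, cfNum s (n+1) * cfDen s n - cfNum s n * cfDen s (n+1) = (-1)^n := by
  intro n
  induction n with
  | zero => simp [cfNum, cfDen]; ring
  | succ n ih =>
    rw [cfNum_rec, cfDen_rec]
    have : s (n+2) * cfNum s (n+1) * cfDen s (n+1) - cfNum s (n+1) * (s (n+2) * cfDen s (n+1)) = 0 := by ring
    calc (s (n + 2) * cfNum s (n + 1) + cfNum s n) * cfDen s (n + 1) -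
        cfNum s (n + 1) * (s (n + 2) * cfDen s (n + 1) + cfDen s n)
        = -(cfNum s (n+1) * cfDen s n - cfNum s n * cfDen s (n+1)) := by ring
    _ = -(-1)^n := by rw [ih]
    _ = (-1)^(n+1) := by ring

/-- the convergents, as reals -/
noncomputable def X (s : ℕ → ℤ) (n : ℕ) : ℝ := (cfNum s n : ℝ) / (cfDen s n : ℝ)

lemma den_pos_real {s : ℕ → ℤ} (hs : Pos1 s) (n : ℕ) : (0:ℝ) < (cfDen s n : ℝ) := by
  exact_mod_cast lt_of_lt_of_le zero_lt_one (den_pos hs n)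

lemma X_diff {s : ℕ → ℤ} (hs : Pos1 s) (n : ℕ) :
    X s (n+1) - X s n = (-1)^n / ((cfDen s n : ℝ) * (cfDen s (n+1) : ℝ)) := by
  have h0 := (den_pos_real hs n).ne'
  have h1 := (den_pos_real hs (n+1)).ne'
  have hdet : ((cfNum s (n+1) : ℝ) * cfDen s n - cfNum s n * cfDen s (n+1)) = (-1)^n := by
    exact_mod_cast congrArg (Int.cast : ℤ → ℝ) (det s n)
  have h : X s (n+1) - X s n =
      ((cfNum s (n+1) : ℝ) * cfDen s n - cfNum s n * cfDen s (n+1)) /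
        ((cfDen s n : ℝ) * (cfDen s (n+1) : ℝ)) := by
    rw [X, X, div_sub_div _ _ h1 h0]; ring
  rw [h, hdet]

lemma X_diff_abs {s : ℕ → ℤ} (hs : Pos1 s) (n : ℕ) :
    |X s (n+1) - X s n| ≤ (2:ℝ)⁻¹ ^ n := by
  rw [X_diff hs n, abs_div, abs_pow, abs_neg, abs_one, one_pow]
  have hp : (0:ℝ) < (cfDen s n : ℝ) * (cfDen s (n+1) : ℝ) :=
    mul_pos (den_pos_real hs n) (den_pos_real hs (n+1))
  rw [abs_of_pos hp, div_le_iff₀ hp]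
  have h2 : (2:ℝ)^n ≤ (cfDen s n : ℝ) * (cfDen s (n+1) : ℝ) := by
    exact_mod_cast den_prod hs n
  calc (1:ℝ) = (2:ℝ)⁻¹^n * 2^n := by
        rw [← mul_pow]; norm_num
  _ ≤ _ := by
        apply mul_le_mul_of_nonneg_left h2 (by positivity)

lemma X_dist {s : ℕ → ℤ} (hs : Pos1 s) (n : ℕ) : ∀ m, n ≤ m →
    |X s m - X s n| ≤ 2 * (2:ℝ)⁻¹ ^ n - 2 * (2:ℝ)⁻¹ ^ m := by
  intro m hm
  induction m with
  | zero => simp [Nat.le_zero.mp hm]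
  | succ m ih =>
    rcases Nat.lt_or_ge n (m+1) with h' | h'
    · have hmn : n ≤ m := by omega
      have := ih hmn
      have h2 := X_diff_abs hs m
      calc |X s (m+1) - X s n| ≤ |X s (m+1) - X s m| + |X s m - X s n| := abs_sub_le _ _ _
      _ ≤ (2:ℝ)⁻¹^m + (2 * (2:ℝ)⁻¹^n - 2 * (2:ℝ)⁻¹^m) := by linarith
      _ = 2 * (2:ℝ)⁻¹^n - 2 * (2:ℝ)⁻¹^(m+1) := by ring
    · have : n = m + 1 := by omega
      simp [this]

end CFAux

namespace CFAux2
open CFAux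

lemma cauchy_X {s : ℕ → ℤ} (hs : Pos1 s) : CauchySeq (X s) := by
  apply cauchySeq_of_le_geometric (2:ℝ)⁻¹ 1 (by norm_num)
  intro n
  rw [Real.dist_eq, abs_sub_comm]
  simpa using X_diff_abs hs n

lemma tendsto_X {s : ℕ → ℤ} (hs : Pos1 s) : Tendsto (X s) atTop (nhds (cfVal s)) := by
  rcases cauchySeq_tendsto_of_complete (cauchy_X hs) with ⟨l, hl⟩
  have : cfVal s = l := hl.limUnder_eq
  rw [cfVal] at this ⊢
  rw [this]  -- cfVal unfolds to limUnder of X?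
  exact hl

lemma cfVal_sub_X {s : ℕ → ℤ} (hs : Pos1 s) (n : ℕ) :
    |cfVal s - X s n| ≤ 2 * (2:ℝ)⁻¹ ^ n := by
  have h : Tendsto (fun m => |X s m - X s n|) atTop (nhds |cfVal s - X s n|) :=
    ((tendsto_X hs).sub tendsto_const_nhds).abs
  apply le_of_tendsto h
  filter_upwards [eventually_ge_atTop n] with m hm
  calc |X s m - X s n| ≤ 2 * (2:ℝ)⁻¹ ^ n - 2 * (2:ℝ)⁻¹ ^ m := X_dist hs n m hm
  _ ≤ 2 * (2:ℝ)⁻¹ ^ n := by have : (0:ℝ) ≤ 2 * (2:ℝ)⁻¹ ^ m := by positivity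
                            linarith

lemma num_ge {s : ℕ → ℤ} (hs : Pos1 s) (h0 : 0 ≤ s 0) :
    ∀ n, s 0 * cfDen s n ≤ cfNum s n := by
  intro n
  induction n using Nat.strong_induction_on with
  | _ n ih =>
    match n with
    | 0 => simp [cfNum, cfDen]
    | 1 => have := hs 1 le_rfl; simp [cfNum, cfDen]; nlinarith
    | n + 2 =>
      have h1 := ih (n+1) (by omega)
      have h2 := ih n (by omega)
      have := hs (n+2) (by omega)
      rw [cfNum_rec, cfDen_rec]; nlinarith

lemma num_le {s : ℕ → ℤ} (hs : Pos1 s) (h0 : 0 ≤ s 0) :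
    ∀ n, cfNum s n ≤ (s 0 + 1) * cfDen s n := by
  intro n
  induction n using Nat.strong_induction_on with
  | _ n ih =>
    match n with
    | 0 => simp [cfNum, cfDen]
    | 1 => have := hs 1 le_rfl; simp [cfNum, cfDen]; nlinarith
    | n + 2 =>
      have h1 := ih (n+1) (by omega)
      have h2 := ih n (by omega)
      have h3 := hs (n+2) (by omega)
      have d1 := den_pos hs (n+1)
      have d0 := den_pos hs n
      rw [cfNum_rec, cfDen_rec]; nlinarith

lemma X_ge {s : ℕ → ℤ} (hs : Pos1 s) (h0 : 0 ≤ s 0) (n : ℕ) : (s 0 : ℝ) ≤ X s n := by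
  rw [X, le_div_iff₀ (den_pos_real hs n)]
  exact_mod_cast num_ge hs h0 n

lemma X_le {s : ℕ → ℤ} (hs : Pos1 s) (h0 : 0 ≤ s 0) (n : ℕ) : X s n ≤ (s 0 : ℝ) + 1 := by
  rw [X, div_le_iff₀ (den_pos_real hs n)]
  have := num_le hs h0 n
  push_cast
  exact_mod_cast this

lemma cfVal_ge {s : ℕ → ℤ} (hs : Pos1 s) (h0 : 0 ≤ s 0) : (s 0 : ℝ) ≤ cfVal s :=
  ge_of_tendsto (tendsto_X hs) (Eventually.of_forall (X_ge hs h0))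

lemma cfVal_le {s : ℕ → ℤ} (hs : Pos1 s) (h0 : 0 ≤ s 0) : cfVal s ≤ (s 0 : ℝ) + 1 :=
  le_of_tendsto (tendsto_X hs) (Eventually.of_forall (X_le hs h0))

/-- key shift relations -/
lemma shift_den (s : ℕ → ℤ) : ∀ k, cfDen s (k + 1) = cfNum (sh s) k := by
  intro k
  induction k using Nat.strong_induction_on with
  | _ k ih =>
    match k with
    | 0 => simp [cfNum, cfDen, sh]
    | 1 => simp [cfNum, cfDen, sh]
    | k + 2 =>
      rw [cfDen_rec, cfNum_rec, ← ih (k+1) (by omega), ← ih k (by omega)]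
      rfl

lemma shift_num (s : ℕ → ℤ) : ∀ k, cfNum s (k + 1) = s 0 * cfNum (sh s) k + cfDen (sh s) k := by
  intro k
  induction k using Nat.strong_induction_on with
  | _ k ih =>
    match k with
    | 0 => simp [cfNum, cfDen, sh]; ring
    | 1 => simp [cfNum, cfDen, sh]; ring
    | k + 2 =>
      rw [cfNum_rec, ih (k+1) (by omega), ih k (by omega), cfNum_rec, cfDen_rec]
      have : s (k+3) = (sh s) (k+2) := rfl
      rw [this]; ring

lemma X_head {s : ℕ → ℤ} (hs : Pos1 s) (k : ℕ) :
    X s (k + 1) = (s 0 : ℝ) + (X (sh s) k)⁻¹ := by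
  have hsh : Pos1 (sh s) := pos1_sh hs (hs 1 le_rfl)
  have hden : (0:ℝ) < (cfDen (sh s) k : ℝ) := den_pos_real hsh k
  have hnum : (0:ℝ) < (cfNum (sh s) k : ℝ) := by
    have h1 : (1:ℤ) ≤ s 1 := hs 1 le_rfl
    have := num_ge hsh (by simpa [sh] using le_trans zero_le_one h1) k
    have hd := den_pos hsh k
    have : (1:ℤ) ≤ cfNum (sh s) k := by
      calc (1:ℤ) ≤ s 1 * cfDen (sh s) k := by nlinarith
      _ ≤ cfNum (sh s) k := by simpa [sh] using this
    exact_mod_cast lt_of_lt_of_le zero_lt_one (by exact_mod_cast this)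
  rw [X, X, shift_den, shift_num]
  push_cast
  field_simp

lemma cfVal_sh_pos {s : ℕ → ℤ} (hs : Pos1 s) : 1 ≤ cfVal (sh s) := by
  have hsh : Pos1 (sh s) := pos1_sh hs (hs 1 le_rfl)
  have h1 : (1:ℤ) ≤ (sh s) 0 := hs 1 le_rfl
  have := cfVal_ge hsh (le_trans zero_le_one h1)
  calc (1:ℝ) ≤ ((sh s) 0 : ℝ) := by exact_mod_cast h1
  _ ≤ cfVal (sh s) := this

lemma cfVal_head {s : ℕ → ℤ} (hs : Pos1 s) :
    cfVal s = (s 0 : ℝ) + (cfVal (sh s))⁻¹ := by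
  have hsh : Pos1 (sh s) := pos1_sh hs (hs 1 le_rfl)
  have hβ : 1 ≤ cfVal (sh s) := cfVal_sh_pos hs
  have h1 : Tendsto (fun k => X s (k + 1)) atTop (nhds (cfVal s)) :=
    (tendsto_X hs).comp (tendsto_add_atTop_nat 1)
  have h2 : Tendsto (fun k => (s 0 : ℝ) + (X (sh s) k)⁻¹) atTop
      (nhds ((s 0 : ℝ) + (cfVal (sh s))⁻¹)) := by
    apply Tendsto.const_add
    exact ((tendsto_X hsh).inv₀ (by linarith)).congr (fun k => rfl)
  have : (fun k => X s (k + 1)) = fun k => (s 0 : ℝ) + (X (sh s) k)⁻¹ := by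
    funext k; exact X_head hs k
  rw [this] at h1
  exact tendsto_nhds_unique h1 h2

end CFAux2

namespace CFAux3
open CFAux CFAux2

lemma cfNum_congr : ∀ (n : ℕ) (s t : ℕ → ℤ), (∀ j, j ≤ n → s j = t j) → cfNum s n = cfNum t n := by
  intro n
  induction n using Nat.strong_induction_on with
  | _ n ih =>
    intro s t h
    match n with
    | 0 => simpa [cfNum] using h 0 le_rfl
    | 1 => simp [cfNum, h 0 (by omega), h 1 le_rfl]
    | n + 2 =>
      rw [cfNum_rec, cfNum_rec, h (n+2) le_rfl,
        ih (n+1) (by omega) s t (fun j hj => h j (by omega)),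
        ih n (by omega) s t (fun j hj => h j (by omega))]

lemma cfDen_congr : ∀ (n : ℕ) (s t : ℕ → ℤ), (∀ j, j ≤ n → s j = t j) → cfDen s n = cfDen t n := by
  intro n
  induction n using Nat.strong_induction_on with
  | _ n ih =>
    intro s t h
    match n with
    | 0 => simp [cfDen]
    | 1 => simp [cfDen, h 1 le_rfl]
    | n + 2 =>
      rw [cfDen_rec, cfDen_rec, h (n+2) le_rfl,
        ih (n+1) (by omega) s t (fun j hj => h j (by omega)),
        ih n (by omega) s t (fun j hj => h j (by omega))]

lemma X_congr {n : ℕ} {s t : ℕ → ℤ} (h : ∀ j, j ≤ n → s j = t j) : X s n = X t n := by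
  rw [X, X, cfNum_congr n s t h, cfDen_congr n s t h]

/-- two infinite continued fractions agreeing up to index r are within 4·2⁻ʳ -/
lemma cfVal_prefix {s t : ℕ → ℤ} (hs : Pos1 s) (ht : Pos1 t) {r : ℕ}
    (h : ∀ j, j ≤ r → s j = t j) : |cfVal s - cfVal t| ≤ 4 * (2:ℝ)⁻¹ ^ r := by
  have h1 := cfVal_sub_X hs r
  have h2 := cfVal_sub_X ht r
  have h3 : X s r = X t r := X_congr h
  calc |cfVal s - cfVal t| = |(cfVal s - X s r) - (cfVal t - X t r)| := by rw [h3]; ring_nf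
  _ ≤ |cfVal s - X s r| + |cfVal t - X t r| := abs_sub _ _
  _ ≤ 2 * (2:ℝ)⁻¹ ^ r + 2 * (2:ℝ)⁻¹ ^ r := by linarith
  _ = 4 * (2:ℝ)⁻¹ ^ r := by ring

/-- comparing convergents of the same sequence -/
lemma X_to_X {s : ℕ → ℤ} (hs : Pos1 s) {r m : ℕ} (h : r ≤ m) :
    |X s m - X s r| ≤ 2 * (2:ℝ)⁻¹ ^ r :=
  le_trans (X_dist hs r m h) (by have : (0:ℝ) ≤ 2 * (2:ℝ)⁻¹ ^ m := by positivity
                                 linarith)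

end CFAux3

namespace CFAux4
open CFAux CFAux2 CFAux3

/-- the reversed-window sequence: `vm s m = (s m, s (m-1), ..., s 1, 1, 1, ...)` -/
def vm (s : ℕ → ℤ) (m : ℕ) : ℕ → ℤ := fun j => if j ≤ m - 1 then s (m - j) else 1

lemma vm_pos1 {s : ℕ → ℤ} (hs : Pos1 s) (m : ℕ) (hm : 1 ≤ m) : Pos1 (vm s m) := by
  intro n hn
  rw [vm]
  split
  · exact hs (m - n) (by omega)
  · exact le_rfl

lemma vm_zero {s : ℕ → ℤ} (m : ℕ) (hm : 1 ≤ m) : vm s m 0 = s m := by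
  simp [vm]

lemma sh_vm (s : ℕ → ℤ) (m : ℕ) : sh (vm s (m + 2)) = vm s (m + 1) := by
  funext j
  simp only [sh, vm]
  rcases Nat.lt_or_ge j (m+1) with h | h
  · rw [if_pos (by omega), if_pos (by omega)]
    congr 1; omega
  · rw [if_neg (by omega), if_neg (by omega)]

lemma mirror {s : ℕ → ℤ} (hs : Pos1 s) :
    ∀ m : ℕ, X (vm s (m+1)) m = (cfDen s (m+1) : ℝ) / (cfDen s m : ℝ) := by
  intro m
  induction m with
  | zero =>
    simp [X, cfNum, cfDen, vm_zero (s := s) 1 le_rfl]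
  | succ m ih =>
    have hp : Pos1 (vm s (m+2)) := vm_pos1 hs (m+2) (by omega)
    have h1 := X_head hp m
    rw [sh_vm, ih] at h1
    rw [h1, vm_zero (s := s) (m+2) (by omega)]
    have d0 := den_pos_real hs m
    have d1 := den_pos_real hs (m+1)
    rw [cfDen_rec]
    push_cast
    field_simp

end CFAux4

namespace CFMain
open CFAux CFAux2 CFAux3 CFAux4

variable {α : ℝ} {a : ℕ → ℤ} {c : ℤ}

/-- tails of `a` -/
noncomputable def A (a : ℕ → ℤ) (k : ℕ) : ℝ := cfVal (fun j => a (k + j))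

section basic

variable (h0 : a 0 = 0) (ha : ∀ n, 1 ≤ n → 1 ≤ a n ∧ a n ≤ c) (hα : α = cfVal a)

lemma pos1_tail (k : ℕ) : (∀ n, 1 ≤ n → 1 ≤ a n) → Pos1 (fun j => a (k + j)) := by
  intro h n hn; exact h (k + n) (by omega)

lemma pos1_a (h : ∀ n, 1 ≤ n → 1 ≤ a n ∧ a n ≤ c) : Pos1 a := fun n hn => (h n hn).1

include ha in
lemma sh_tail (k : ℕ) : sh (fun j => a (k + j)) = fun j => a (k + 1 + j) := by
  funext j; simp only [sh]; congr 1; omega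

include ha in
lemma A_head (k : ℕ) : A a k = (a k : ℝ) + (A a (k + 1))⁻¹ := by
  have := cfVal_head (s := fun j => a (k + j)) (pos1_tail k (fun n hn => (ha n hn).1))
  rw [A, A, this, sh_tail ha]
  simp

include ha in
lemma A_ge (k : ℕ) (hk : 1 ≤ k) : (a k : ℝ) ≤ A a k := by
  have h := cfVal_ge (s := fun j => a (k + j)) (pos1_tail k (fun n hn => (ha n hn).1))
    (by simpa using le_trans zero_le_one (ha k hk).1)
  rw [A]
  simpa using h

include ha in
lemma A_ge_one (k : ℕ) (hk : 1 ≤ k) : (1:ℝ) ≤ A a k := by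
  have h1 : (1:ℝ) ≤ (a k : ℝ) := by exact_mod_cast (ha k hk).1
  linarith [A_ge ha k hk]

include ha in
lemma A_le (k : ℕ) (hk : 1 ≤ k) : A a k ≤ (c:ℝ) + 1 := by
  have := cfVal_le (s := fun j => a (k + j)) (pos1_tail k (fun n hn => (ha n hn).1))
    (by simpa using le_trans zero_le_one (ha k hk).1)
  have hc : (a k : ℝ) ≤ (c:ℝ) := by exact_mod_cast (ha k hk).2
  rw [A]
  calc cfVal (fun j => a (k + j)) ≤ ((fun j => a (k + j)) 0 : ℝ) + 1 := this
  _ ≤ (c:ℝ) + 1 := by simpa using hc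

include h0 ha hα in
lemma alpha_eq : α = (A a 1)⁻¹ := by
  have hA0 : A a 0 = α := by
    rw [A, hα]
    congr 1
    funext j
    simp
  rw [← hA0, A_head ha 0, h0]; simp

include h0 ha hα in
lemma alpha_pos : 0 < α := by
  rw [alpha_eq h0 ha hα]
  have := A_ge_one ha 1 le_rfl
  positivity

end basic

end CFMain

namespace CFMain
open CFAux CFAux2 CFAux3 CFAux4

section main

variable {α : ℝ} {a : ℕ → ℤ} {c : ℤ}
variable (h0 : a 0 = 0) (ha : ∀ n, 1 ≤ n → 1 ≤ a n ∧ a n ≤ c) (hα : α = cfVal a)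

/-- `En n = q_n α - p_n` -/
noncomputable def En (a : ℕ → ℤ) (α : ℝ) (n : ℕ) : ℝ :=
  (cfDen a n : ℝ) * α - (cfNum a n : ℝ)

include h0 ha hα in
lemma key : ∀ n : ℕ,
    ((cfDen a (n+1) : ℝ) * A a (n+2) + (cfDen a n : ℝ)) * α
      = (cfNum a (n+1) : ℝ) * A a (n+2) + (cfNum a n : ℝ) := by
  have hpos : ∀ k, 1 ≤ k → (0:ℝ) < A a k := fun k hk => lt_of_lt_of_le zero_lt_one (A_ge_one ha k hk)
  intro n
  induction n with
  | zero =>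
    have h1 : A a 1 = (a 1 : ℝ) + (A a 2)⁻¹ := A_head ha 1
    have h2 : α = (A a 1)⁻¹ := alpha_eq h0 ha hα
    have p1 : (0:ℝ) < A a 1 := hpos 1 le_rfl
    have p2 : (0:ℝ) < A a 2 := hpos 2 (by omega)
    have e1 : α * A a 1 = 1 := by rw [h2]; field_simp
    have e2 : A a 1 * A a 2 = (a 1 : ℝ) * A a 2 + 1 := by rw [h1]; field_simp
    simp only [cfNum, cfDen, h0]
    push_cast
    have t : α * (A a 1 * A a 2) = A a 2 := by rw [← mul_assoc, e1, one_mul]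
    linear_combination t - α * e2
  | succ n ih =>
    have hB : (0:ℝ) < A a (n+3) := hpos (n+3) (by omega)
    have e : A a (n+2) * A a (n+3) = (a (n+2) : ℝ) * A a (n+3) + 1 := by
      rw [A_head ha (n+2)]; field_simp
    rw [cfNum_rec, cfDen_rec]
    push_cast
    linear_combination (A a (n+3)) * ih - ((cfDen a (n+1) : ℝ) * α - (cfNum a (n+1):ℝ)) * e

include h0 ha hα in
lemma En_eq (n : ℕ) :
    En a α (n+1) = (-1:ℝ)^(n+1) / ((cfDen a (n+1) : ℝ) * A a (n+2) + (cfDen a n : ℝ)) := by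
  have hpos : (0:ℝ) < A a (n+2) := lt_of_lt_of_le zero_lt_one (A_ge_one ha (n+2) (by omega))
  have hd0 := den_pos_real (pos1_a ha) n
  have hd1 := den_pos_real (pos1_a ha) (n+1)
  have hD : (0:ℝ) < (cfDen a (n+1) : ℝ) * A a (n+2) + (cfDen a n : ℝ) := by positivity
  rw [eq_div_iff hD.ne']
  have hdet : ((cfNum a (n+1) : ℝ) * cfDen a n - cfNum a n * cfDen a (n+1)) = (-1:ℝ)^n := by
    exact_mod_cast congrArg (Int.cast : ℤ → ℝ) (det a n)
  rw [En]
  linear_combination (cfDen a (n+1) : ℝ) * key h0 ha hα n - hdet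

include h0 ha hα in
lemma En_sign (n : ℕ) : 0 < (-1:ℝ)^n * En a α n := by
  match n with
  | 0 =>
    simp only [En, cfNum, cfDen, h0, pow_zero]
    push_cast
    simpa using alpha_pos h0 ha hα
  | n + 1 =>
    rw [En_eq h0 ha hα n]
    have hpos : (0:ℝ) < A a (n+2) := lt_of_lt_of_le zero_lt_one (A_ge_one ha (n+2) (by omega))
    have hd0 := den_pos_real (pos1_a ha) n
    have hd1 := den_pos_real (pos1_a ha) (n+1)
    have hD : (0:ℝ) < (cfDen a (n+1) : ℝ) * A a (n+2) + (cfDen a n : ℝ) := by positivity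
    rw [mul_div_assoc']
    apply div_pos _ hD
    have : ((-1:ℝ)^(n+1)) * ((-1:ℝ)^(n+1)) = 1 := by
      rw [← pow_add, ← two_mul, pow_mul]; norm_num
    nlinarith [this]

/-- `Λ n = λ'_(n+1) = A (n+2) + q n / q (n+1)` -/
noncomputable def Lam (a : ℕ → ℤ) : ℕ → ℝ :=
  fun n => A a (n+2) + (cfDen a n : ℝ) / (cfDen a (n+1) : ℝ)

include ha in
lemma Lam_ge_one (n : ℕ) : 1 ≤ Lam a n := by
  have h1 := A_ge_one ha (n+2) (by omega)
  have hd0 := den_pos_real (pos1_a ha) n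
  have hd1 := den_pos_real (pos1_a ha) (n+1)
  have : 0 ≤ (cfDen a n : ℝ) / (cfDen a (n+1) : ℝ) := by positivity
  rw [Lam]; linarith

include ha in
lemma Lam_le (n : ℕ) : Lam a n ≤ (c:ℝ) + 2 := by
  have h1 := A_le ha (n+2) (by omega)
  have hd1 := den_pos_real (pos1_a ha) (n+1)
  have hm : (cfDen a n : ℝ) ≤ (cfDen a (n+1) : ℝ) := by exact_mod_cast den_mono (pos1_a ha) n
  have : (cfDen a n : ℝ) / (cfDen a (n+1) : ℝ) ≤ 1 := by
    rw [div_le_one hd1]; exact hm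
  rw [Lam]; linarith

include h0 ha hα in
lemma g_eq (n : ℕ) : (cfDen a (n+1) : ℝ) * |En a α (n+1)| = (Lam a n)⁻¹ := by
  have hpos : (0:ℝ) < A a (n+2) := lt_of_lt_of_le zero_lt_one (A_ge_one ha (n+2) (by omega))
  have hd0 := den_pos_real (pos1_a ha) n
  have hd1 := den_pos_real (pos1_a ha) (n+1)
  have hD : (0:ℝ) < (cfDen a (n+1) : ℝ) * A a (n+2) + (cfDen a n : ℝ) := by positivity
  rw [En_eq h0 ha hα n, abs_div, abs_of_pos hD, abs_pow, abs_neg, abs_one, one_pow, Lam]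
  rw [eq_comm, inv_eq_iff_eq_inv, eq_comm]
  field_simp

end main
end CFMain

namespace CFMain
open CFAux CFAux2 CFAux3 CFAux4

section bestapprox

variable {α : ℝ} {a : ℕ → ℤ} {c : ℤ}
variable (h0 : a 0 = 0) (ha : ∀ n, 1 ≤ n → 1 ≤ a n ∧ a n ≤ c) (hα : α = cfVal a)

include h0 ha hα in
/-- best approximation: if `q n ≤ Q < q (n+1)` then `|Qα - P| ≥ |q_n α - p_n|`. -/
lemma best (n : ℕ) (P Q : ℤ) (hQ1 : cfDen a n ≤ Q) (hQ2 : Q < cfDen a (n+1)) :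
    |En a α n| ≤ |(Q:ℝ) * α - (P:ℝ)| := by
  have hd0 : (1:ℤ) ≤ cfDen a n := den_pos (pos1_a ha) n
  have hd1 : (1:ℤ) ≤ cfDen a (n+1) := den_pos (pos1_a ha) (n+1)
  have hdet : cfNum a (n+1) * cfDen a n - cfNum a n * cfDen a (n+1) = (-1:ℤ)^n := det a n
  set d : ℤ := (-1:ℤ)^n with hd_def
  have hd : d * d = 1 := by rw [hd_def, ← pow_add, ← two_mul, pow_mul]; norm_num
  set x : ℤ := d * (Q * cfNum a (n+1) - P * cfDen a (n+1)) with hx_def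
  set y : ℤ := d * (P * cfDen a n - Q * cfNum a n) with hy_def
  have hQ : x * cfDen a n + y * cfDen a (n+1) = Q := by
    rw [hx_def, hy_def]; linear_combination (d * Q) * hdet + Q * hd
  have hP : x * cfNum a n + y * cfNum a (n+1) = P := by
    rw [hx_def, hy_def]; linear_combination (d * P) * hdet + P * hd
  -- real decomposition
  have hreal : (Q:ℝ) * α - (P:ℝ) = (x:ℝ) * En a α n + (y:ℝ) * En a α (n+1) := by
    rw [En, En, ← hQ, ← hP]; push_cast; ring
  have su : 0 < (-1:ℝ)^n * En a α n := En_sign h0 ha hα n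
  have sv : 0 < (-1:ℝ)^(n+1) * En a α (n+1) := En_sign h0 ha hα (n+1)
  have hsq : ((-1:ℝ)^n) * ((-1:ℝ)^n) = 1 := by rw [← pow_add, ← two_mul, pow_mul]; norm_num
  have huv : En a α n * En a α (n+1) < 0 := by
    rcases Nat.even_or_odd n with he | ho
    · rw [he.neg_one_pow, one_mul] at su
      rw [(Even.add_one he).neg_one_pow, neg_one_mul] at sv
      nlinarith
    · rw [ho.neg_one_pow, neg_one_mul] at su
      rw [(Odd.add_one ho).neg_one_pow, one_mul] at sv
      nlinarith
  have hu_ne : En a α n ≠ 0 := by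
    intro h; rw [h] at su; simp at su
  rcases eq_or_ne y 0 with hy0 | hy0
  · -- Q = x q_n, x ≥ 1
    rw [hy0] at hQ hP
    simp only [zero_mul, add_zero] at hQ hP
    have hx1 : 1 ≤ x := by nlinarith [hQ, hd0, hQ1]
    rw [hreal, hy0]
    push_cast
    rw [zero_mul, add_zero, abs_mul]
    have : (1:ℝ) ≤ |(x:ℝ)| := by
      rw [abs_of_pos (by exact_mod_cast hx1 : (0:ℝ) < (x:ℝ))]
      exact_mod_cast hx1
    nlinarith [abs_nonneg (En a α n), this]
  rcases eq_or_ne x 0 with hx0 | hx0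
  · exfalso
    rw [hx0] at hQ
    simp only [zero_mul, zero_add] at hQ
    rcases le_or_gt 1 y with hy1 | hy1
    · nlinarith
    · have : y ≤ -1 := by omega
      nlinarith
  · -- x, y both nonzero: opposite signs
    have hxy : x * y < 0 := by
      rcases lt_or_gt_of_ne hx0 with hx | hx <;> rcases lt_or_gt_of_ne hy0 with hy | hy
      · nlinarith  -- both negative: Q < 0
      · nlinarith
      · nlinarith
      · nlinarith  -- both positive: Q ≥ q_n + q_{n+1} > Q
    -- same sign of the two real terms
    have hsame : 0 < ((x:ℝ) * En a α n) * ((y:ℝ) * En a α (n+1)) := by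
      have hxy' : ((x:ℝ)) * (y:ℝ) < 0 := by exact_mod_cast hxy
      nlinarith [huv, hxy']
    have habs : |(x:ℝ) * En a α n + (y:ℝ) * En a α (n+1)|
        = |(x:ℝ) * En a α n| + |(y:ℝ) * En a α (n+1)| := by
      rcases le_or_gt 0 ((x:ℝ) * En a α n) with h1 | h1
      · have h2 : 0 ≤ (y:ℝ) * En a α (n+1) := by nlinarith
        rw [abs_of_nonneg h1, abs_of_nonneg h2, abs_of_nonneg (by linarith)]
      · have h2 : (y:ℝ) * En a α (n+1) < 0 := by nlinarith
        rw [abs_of_neg h1, abs_of_neg h2, abs_of_neg (by linarith)]; ring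
    rw [hreal, habs]
    have hx1 : (1:ℝ) ≤ |(x:ℝ)| := by
      have h1 : (1:ℤ) ≤ |x| := Int.one_le_abs hx0
      exact_mod_cast h1
    rw [abs_mul]
    nlinarith [abs_nonneg ((y:ℝ) * En a α (n+1)), abs_nonneg (En a α n), hx1]

end bestapprox
end CFMain

namespace CFAux
lemma den_lb {s : ℕ → ℤ} (hs : Pos1 s) : ∀ n : ℕ, (n : ℤ) ≤ 2 * cfDen s n := by
  intro n
  induction n using Nat.strong_induction_on with
  | _ n ih =>
    match n with
    | 0 => simp [cfDen]
    | 1 => have := hs 1 le_rfl; simp [cfDen]; omega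
    | n + 2 =>
      have h1 := ih n (by omega)
      have h2 := den_pos hs n
      have h3 := den_pos hs (n+1)
      have h4 := hs (n+2) (by omega)
      rw [cfDen_rec]
      push_cast
      nlinarith
end CFAux

namespace CFMain
open CFAux CFAux2 CFAux3 CFAux4 Filter

section liminfsec

variable {α : ℝ} {a : ℕ → ℤ} {c : ℤ}
variable (h0 : a 0 = 0) (ha : ∀ n, 1 ≤ n → 1 ≤ a n ∧ a n ≤ c) (hα : α = cfVal a)

noncomputable def ff (α : ℝ) : ℕ → ℝ := fun q : ℕ => ⨅ p : ℤ, |(q : ℝ) * ((q : ℝ) * α - (p : ℝ))|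

lemma ff_bdd (α : ℝ) (q : ℕ) : BddBelow (Set.range fun p : ℤ => |(q : ℝ) * ((q : ℝ) * α - (p : ℝ))|) :=
  ⟨0, by rintro _ ⟨p, rfl⟩; positivity⟩

lemma ff_nonneg (α : ℝ) (q : ℕ) : 0 ≤ ff α q :=
  le_ciInf fun p => abs_nonneg _

include h0 ha hα in
lemma ff_le (n : ℕ) : ff α (cfDen a (n+1)).toNat ≤ (Lam a n)⁻¹ := by
  have hd1 : (1:ℤ) ≤ cfDen a (n+1) := den_pos (pos1_a ha) (n+1)
  have hcast : (((cfDen a (n+1)).toNat : ℕ) : ℝ) = (cfDen a (n+1) : ℝ) := by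
    have h := Int.toNat_of_nonneg (by omega : (0:ℤ) ≤ cfDen a (n+1))
    exact_mod_cast h
  calc ff α (cfDen a (n+1)).toNat
      ≤ |((cfDen a (n+1)).toNat : ℝ) * (((cfDen a (n+1)).toNat : ℝ) * α - (cfNum a (n+1) : ℝ))| :=
        ciInf_le (ff_bdd α _) (cfNum a (n+1))
  _ = (cfDen a (n+1) : ℝ) * |En a α (n+1)| := by
        rw [hcast, En, abs_mul, abs_of_pos (den_pos_real (pos1_a ha) (n+1))]
  _ = (Lam a n)⁻¹ := g_eq h0 ha hα n

include h0 ha hα in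
lemma ff_ge (n Q : ℕ) (hQ1 : cfDen a n ≤ (Q:ℤ)) (hQ2 : (Q:ℤ) < cfDen a (n+1)) :
    (cfDen a n : ℝ) * |En a α n| ≤ ff α Q := by
  apply le_ciInf
  intro p
  have hb := best h0 ha hα n p Q hQ1 hQ2
  have hQpos : (0:ℝ) ≤ (Q:ℝ) := by positivity
  have hqQ : (cfDen a n : ℝ) ≤ (Q:ℝ) := by exact_mod_cast hQ1
  have hd0 : (0:ℝ) < (cfDen a n : ℝ) := den_pos_real (pos1_a ha) n
  calc (cfDen a n : ℝ) * |En a α n| ≤ (Q:ℝ) * |En a α n| := by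
        apply mul_le_mul_of_nonneg_right hqQ (abs_nonneg _)
  _ ≤ (Q:ℝ) * |(Q:ℝ) * α - (p:ℝ)| := by
        apply mul_le_mul_of_nonneg_left hb hQpos
  _ = |(Q:ℝ) * ((Q:ℝ) * α - (p:ℝ))| := by
        rw [abs_mul, abs_of_nonneg hQpos]

include ha in
lemma exists_interval (Q : ℕ) (hQ : 1 ≤ Q) :
    ∃ n : ℕ, cfDen a n ≤ (Q:ℤ) ∧ (Q:ℤ) < cfDen a (n+1) := by
  have hex : ∃ m : ℕ, (Q:ℤ) < cfDen a (m+1) := by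
    rcases den_unbounded (pos1_a ha) (Q:ℤ) with ⟨m, hm⟩
    exact ⟨m, lt_of_lt_of_le hm (den_mono_le (pos1_a ha) (by omega))⟩
  classical
  let n := Nat.find hex
  refine ⟨n, ?_, Nat.find_spec hex⟩
  match hn : n with
  | 0 => simpa [cfDen] using hQ
  | m + 1 =>
    have := Nat.find_min hex (by omega : m < n)
    omega

end liminfsec
end CFMain

namespace CFMain
open CFAux CFAux2 CFAux3 CFAux4 Filter

section liminfsec2

variable {α : ℝ} {a : ℕ → ℤ} {c : ℤ}
variable (h0 : a 0 = 0) (ha : ∀ n, 1 ≤ n → 1 ≤ a n ∧ a n ≤ c) (hα : α = cfVal a)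

noncomputable def LL (a : ℕ → ℤ) : ℝ := limsup (Lam a) atTop

include ha in
lemma Lam_bddAbove : IsBoundedUnder (· ≤ ·) atTop (Lam a) :=
  isBoundedUnder_of ⟨(c:ℝ) + 2, Lam_le ha⟩

include ha in
lemma Lam_bddBelow : IsBoundedUnder (· ≥ ·) atTop (Lam a) :=
  isBoundedUnder_of ⟨1, Lam_ge_one ha⟩

include ha in
lemma LL_ge_one : 1 ≤ LL a :=
  le_limsup_of_frequently_le (Frequently.of_forall (Lam_ge_one ha)) (Lam_bddAbove ha)

include ha in
lemma QQ_large (b : ℕ) : ∀ n, 2*b ≤ n → b ≤ (cfDen a (n+1)).toNat := by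
  intro n hn
  have h1 := den_lb (pos1_a ha) (n+1)
  omega

include ha in
lemma freq_lift {R : ℕ → Prop} (hR : ∃ᶠ n in atTop, R n) {P : ℕ → Prop}
    (h : ∀ n, R n → P ((cfDen a (n+1)).toNat)) : ∃ᶠ Q in atTop, P Q := by
  rw [frequently_atTop]
  intro N
  rcases frequently_atTop.mp hR (2*N) with ⟨n, hn1, hn2⟩
  exact ⟨(cfDen a (n+1)).toNat, QQ_large ha N n hn1, h n hn2⟩

include h0 ha hα in
lemma ff_cobdd : IsCoboundedUnder (· ≥ ·) atTop (ff α) := by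
  refine ⟨1, fun x hx => ?_⟩
  rw [eventually_map] at hx
  have hfreq : ∃ᶠ Q in atTop, ff α Q ≤ 1 := by
    apply freq_lift ha (Frequently.of_forall (fun n => trivial))
    intro n _
    calc ff α (cfDen a (n+1)).toNat ≤ (Lam a n)⁻¹ := ff_le h0 ha hα n
    _ ≤ 1 := by
        have := Lam_ge_one ha n
        rw [inv_le_one_iff₀]; right; exact this
  rcases (hx.and_frequently hfreq).exists with ⟨Q, h1, h2⟩
  exact le_trans h1 h2

include h0 ha hα in
lemma liminf_ff_le (ε : ℝ) (hε : 0 < ε) (hε1 : ε < 1) :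
    liminf (ff α) atTop ≤ (LL a - ε)⁻¹ := by
  have hcob : IsCoboundedUnder (· ≤ ·) atTop (Lam a) :=
    (Lam_bddBelow ha).isCoboundedUnder_le
  have hfreq : ∃ᶠ n in atTop, LL a - ε < Lam a n :=
    frequently_lt_of_lt_limsup hcob (by have := LL_ge_one ha; rw [LL] at *; linarith)
  have hLpos : 0 < LL a - ε := by have := LL_ge_one ha; linarith
  have hfr2 : ∃ᶠ Q in atTop, ff α Q ≤ (LL a - ε)⁻¹ := by
    apply freq_lift ha hfreq
    intro n hn
    calc ff α (cfDen a (n+1)).toNat ≤ (Lam a n)⁻¹ := ff_le h0 ha hα n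
    _ ≤ (LL a - ε)⁻¹ := by
        apply inv_anti₀ hLpos (le_of_lt hn)
  exact liminf_le_of_frequently_le hfr2 (isBoundedUnder_of ⟨0, ff_nonneg α⟩)

include h0 ha hα in
lemma liminf_ff_ge (ε : ℝ) (hε : 0 < ε) :
    (LL a + ε)⁻¹ ≤ liminf (ff α) atTop := by
  have hev : ∀ᶠ n in atTop, Lam a n < LL a + ε :=
    eventually_lt_of_limsup_lt (by rw [LL]; linarith) (Lam_bddAbove ha)
  rcases eventually_atTop.mp hev with ⟨N, hN⟩
  have hLpos : 0 < LL a + ε := by have := LL_ge_one ha; linarith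
  apply le_liminf_of_le (ff_cobdd h0 ha hα)
  rw [eventually_atTop]
  refine ⟨max 1 (cfDen a (N+1)).toNat, fun Q hQ => ?_⟩
  have hQ1 : 1 ≤ Q := le_trans (le_max_left _ _) hQ
  have hQ2 : cfDen a (N+1) ≤ (Q:ℤ) := by
    have h1 : (cfDen a (N+1)).toNat ≤ Q := le_trans (le_max_right _ _) hQ
    have h2 : (0:ℤ) ≤ cfDen a (N+1) := by linarith [den_pos (pos1_a ha) (N+1)]
    omega
  rcases exists_interval ha Q hQ1 with ⟨n, hn1, hn2⟩
  have hnN : N + 1 ≤ n := by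
    by_contra hcon
    push_neg at hcon
    have : cfDen a (n+1) ≤ cfDen a (N+1) := den_mono_le (pos1_a ha) (by omega)
    omega
  obtain ⟨m, rfl⟩ : ∃ m, n = m + 1 := ⟨n - 1, by omega⟩
  calc (LL a + ε)⁻¹ ≤ (Lam a m)⁻¹ := by
        apply inv_anti₀ (lt_of_lt_of_le zero_lt_one (Lam_ge_one ha m))
        exact le_of_lt (hN m (by omega))
  _ = (cfDen a (m+1) : ℝ) * |En a α (m+1)| := (g_eq h0 ha hα m).symm
  _ ≤ ff α Q := ff_ge h0 ha hα (m+1) Q hn1 hn2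

include h0 ha hα in
lemma liminf_ff_eq : liminf (ff α) atTop = (LL a)⁻¹ := by
  have hL1 := LL_ge_one ha
  have hLpos : (0:ℝ) < LL a := by linarith
  apply le_antisymm
  · -- via ε = (k+2)⁻¹ → 0
    have hconv : Tendsto (fun k : ℕ => (LL a - ((k:ℝ)+2)⁻¹)⁻¹) atTop (nhds (LL a)⁻¹) := by
      have h1 : Tendsto (fun k : ℕ => ((k:ℝ)+2)⁻¹) atTop (nhds 0) := by
        apply tendsto_inv_atTop_zero.comp
        apply tendsto_atTop_add_const_right
        exact tendsto_natCast_atTop_atTop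
      have h2 : Tendsto (fun k : ℕ => LL a - ((k:ℝ)+2)⁻¹) atTop (nhds (LL a)) := by
        simpa using tendsto_const_nhds.sub h1
      exact h2.inv₀ hLpos.ne'
    apply ge_of_tendsto hconv
    apply Eventually.of_forall
    intro k
    apply liminf_ff_le h0 ha hα
    · positivity
    · have h2 : (0:ℝ) ≤ (k:ℝ) := Nat.cast_nonneg k
      rw [inv_lt_one_iff₀]; right; linarith
  · have hconv : Tendsto (fun k : ℕ => (LL a + ((k:ℝ)+2)⁻¹)⁻¹) atTop (nhds (LL a)⁻¹) := by
      have h1 : Tendsto (fun k : ℕ => ((k:ℝ)+2)⁻¹) atTop (nhds 0) := by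
        apply tendsto_inv_atTop_zero.comp
        apply tendsto_atTop_add_const_right
        exact tendsto_natCast_atTop_atTop
      have h2 : Tendsto (fun k : ℕ => LL a + ((k:ℝ)+2)⁻¹) atTop (nhds (LL a)) := by
        simpa using tendsto_const_nhds.add h1
      exact h2.inv₀ hLpos.ne'
    apply le_of_tendsto hconv
    apply Eventually.of_forall
    intro k
    apply liminf_ff_ge h0 ha hα
    positivity

include h0 ha hα in
lemma lagrange_eq : lagrangeConst α = LL a := by
  have : lagrangeConst α = (liminf (ff α) atTop)⁻¹ := rfl
  rw [this, liminf_ff_eq h0 ha hα, inv_inv]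

end liminfsec2
end CFMain

namespace CFMain
open CFAux CFAux2 CFAux3 CFAux4 Filter

section subseq

variable {α : ℝ} {a : ℕ → ℤ} {c : ℤ}
variable (h0 : a 0 = 0) (ha : ∀ n, 1 ≤ n → 1 ≤ a n ∧ a n ≤ c) (hα : α = cfVal a)

include ha in
lemma exists_subseq : ∃ φ : ℕ → ℕ, StrictMono φ ∧
    Tendsto (fun k => Lam a (φ k)) atTop (nhds (LL a)) := by
  have hstep : ∀ k N : ℕ, ∃ n, N ≤ n ∧ |Lam a n - LL a| < 1/((k:ℝ)+1) := by
    intro k N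
    have hδ : (0:ℝ) < 1/((k:ℝ)+1) := by positivity
    have hfreq : ∃ᶠ n in atTop, LL a - 1/((k:ℝ)+1) < Lam a n :=
      frequently_lt_of_lt_limsup ((Lam_bddBelow ha).isCoboundedUnder_le) (by rw [LL] at *; linarith)
    have hev : ∀ᶠ n in atTop, Lam a n < LL a + 1/((k:ℝ)+1) :=
      eventually_lt_of_limsup_lt (by rw [LL]; linarith) (Lam_bddAbove ha)
    have := (hfreq.and_eventually hev).and_eventually (eventually_ge_atTop N)
    rcases this.exists with ⟨n, ⟨h1, h2⟩, h3⟩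
    exact ⟨n, h3, abs_lt.mpr ⟨by linarith, by linarith⟩⟩
  choose g hg1 hg2 using hstep
  set φ : ℕ → ℕ := fun k => Nat.rec (g 0 0) (fun k ih => g (k+1) (ih+1)) k with hφ
  have hmono : StrictMono φ := by
    apply strictMono_nat_of_lt_succ
    intro k
    have : φ (k+1) = g (k+1) (φ k + 1) := rfl
    rw [this]
    have := hg1 (k+1) (φ k + 1)
    omega
  refine ⟨φ, hmono, ?_⟩
  rw [Metric.tendsto_atTop]
  intro ε hε
  rcases exists_nat_gt (1/ε) with ⟨K, hK⟩
  refine ⟨K, fun k hk => ?_⟩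
  have hb : |Lam a (φ k) - LL a| < 1/((k:ℝ)+1) := by
    match k with
    | 0 => exact hg2 0 0
    | k + 1 => exact hg2 (k+1) (φ k + 1)
  have h1 : (1:ℝ)/((k:ℝ)+1) ≤ 1/((K:ℝ)+1) := by
    apply div_le_div_of_nonneg_left zero_le_one (by positivity)
    push_cast; exact_mod_cast by omega
  have h2 : (1:ℝ)/((K:ℝ)+1) < ε := by
    rw [div_lt_iff₀ (by positivity)]
    rw [div_lt_iff₀ hε] at hK
    nlinarith
  rw [Real.dist_eq]
  linarith

end subseq
end CFMain

namespace CFMain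
open CFAux CFAux2 CFAux3 CFAux4 Filter

section diagonal

variable {a : ℕ → ℤ} {c : ℤ}

/-- extension of `a` to `ℤ` -/
def aZ (a : ℕ → ℤ) : ℤ → ℤ := fun m => if 1 ≤ m then a m.toNat else 1

lemma aZ_mem (ha : ∀ n, 1 ≤ n → 1 ≤ a n ∧ a n ≤ c) (m : ℤ) (hm : 1 ≤ m) :
    1 ≤ aZ a m ∧ aZ a m ≤ c := by
  rw [aZ, if_pos hm]
  exact ha m.toNat (by omega)

lemma aZ_pos (ha : ∀ n, 1 ≤ n → 1 ≤ a n ∧ a n ≤ c) (m : ℤ) : 1 ≤ aZ a m := by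
  rw [aZ]
  split
  · exact (ha m.toNat (by omega)).1
  · exact le_rfl

def clamp (c : ℤ) (z : ℤ) : ℤ := max 1 (min c z)

lemma clamp_mem (hc : 1 ≤ c) (z : ℤ) : clamp c z ∈ Set.Icc (1:ℤ) c := by
  constructor
  · exact le_max_left _ _
  · rw [clamp]; omega

lemma clamp_eq (z : ℤ) (h1 : 1 ≤ z) (h2 : z ≤ c) : clamp c z = z := by
  rw [clamp]; omega

/-- the window of radius `R` of `a` around center `(n k) + 2`, as a clamped pattern -/
def patmap (a : ℕ → ℤ) (c : ℤ) (hc : 1 ≤ c) (n : ℕ → ℕ) (i : ℕ) (k : ℕ) :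
    Fin (2*i+1) → Set.Icc (1:ℤ) c :=
  fun j => ⟨clamp c (aZ a ((n k : ℤ) + 2 + ((j:ℤ) - (i:ℤ)))), clamp_mem hc _⟩

lemma pigeonhole {T : Set ℕ} (hT : T.Infinite) {F : Type*} [Finite F] (f : ℕ → F) :
    ∃ v : F, {k ∈ T | f k = v}.Infinite := by
  haveI : Infinite ↥T := hT.to_subtype
  rcases Finite.exists_infinite_fiber (fun k : ↥T => f k) with ⟨v, hv⟩
  refine ⟨v, ?_⟩
  have h1 : ((fun k : ↥T => f k) ⁻¹' {v} : Set ↥T).Infinite := by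
    rw [← Set.infinite_coe_iff]
    exact hv
  have h2 := h1.image (Set.injOn_of_injective Subtype.val_injective)
  apply h2.mono
  rintro x ⟨y, hy, rfl⟩
  exact ⟨y.2, hy⟩

variable (hc : 1 ≤ c) (n : ℕ → ℕ)

include hc in
lemma exists_sigma :
    ∃ σ : ℕ → Set ℕ, (∀ i, (σ i).Infinite) ∧ (∀ i, σ (i+1) ⊆ σ i) ∧ (∀ i, σ i ⊆ Set.Ici i) ∧
      (∀ i, ∀ k ∈ σ i, ∀ k' ∈ σ i, patmap a c hc n i k = patmap a c hc n i k') := by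
  classical
  have hstep : ∀ (i : ℕ) (T : Set ℕ), ∃ T' : Set ℕ, T.Infinite →
      (T' ⊆ T ∧ T'.Infinite ∧ ∀ k ∈ T', ∀ k' ∈ T', patmap a c hc n i k = patmap a c hc n i k') := by
    intro i T
    by_cases hT : T.Infinite
    · rcases pigeonhole hT (patmap a c hc n i) with ⟨v, hv⟩
      refine ⟨{k ∈ T | patmap a c hc n i k = v}, fun _ => ⟨fun k hk => hk.1, hv, ?_⟩⟩
      intro k hk k' hk'
      rw [hk.2, hk'.2]
    · exact ⟨∅, fun h => absurd h hT⟩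
  choose g hg using hstep
  set σ : ℕ → Set ℕ := fun i => Nat.rec (g 0 (Set.Ici 0)) (fun i Si => g (i+1) (Si ∩ Set.Ici (i+1))) i
    with hσ
  have hIci : ∀ m : ℕ, (Set.Ici m).Infinite := fun m => Set.Ici_infinite _
  have hInt : ∀ (T : Set ℕ) (m : ℕ), T.Infinite → (T ∩ Set.Ici m).Infinite := by
    intro T m hT
    have : T \ Set.Iio m ⊆ T ∩ Set.Ici m := by
      intro x hx
      exact ⟨hx.1, by simpa using hx.2⟩
    exact (hT.diff (Set.finite_Iio m)).mono this
  have hinf : ∀ i, (σ i).Infinite := by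
    intro i
    induction i with
    | zero => exact (hg 0 (Set.Ici 0) (hIci 0)).2.1
    | succ i ih =>
      have : σ (i+1) = g (i+1) (σ i ∩ Set.Ici (i+1)) := rfl
      rw [this]
      exact (hg (i+1) _ (hInt _ _ ih)).2.1
  have hsub : ∀ i, σ (i+1) ⊆ σ i := by
    intro i
    have h1 : σ (i+1) = g (i+1) (σ i ∩ Set.Ici (i+1)) := rfl
    rw [h1]
    exact fun k hk => ((hg (i+1) _ (hInt _ _ (hinf i))).1 hk).1
  have hici : ∀ i, σ i ⊆ Set.Ici i := by
    intro i
    match i with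
    | 0 => exact fun k _ => Nat.zero_le k
    | i + 1 =>
      have h1 : σ (i+1) = g (i+1) (σ i ∩ Set.Ici (i+1)) := rfl
      rw [h1]
      exact fun k hk => ((hg (i+1) _ (hInt _ _ (hinf i))).1 hk).2
  refine ⟨σ, hinf, hsub, hici, ?_⟩
  intro i
  match i with
  | 0 => exact (hg 0 (Set.Ici 0) (hIci 0)).2.2
  | i + 1 => exact (hg (i+1) _ (hInt _ _ (hinf i))).2.2

end diagonal
end CFMain


namespace CFMain
open CFAux CFAux2 CFAux3 CFAux4 Filter

section approxsec

variable {α : ℝ} {a : ℕ → ℤ} {c : ℤ}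
variable (h0 : a 0 = 0) (ha : ∀ n, 1 ≤ n → 1 ≤ a n ∧ a n ≤ c) (hα : α = cfVal a)

lemma inv_diff {x y : ℝ} (hx : 1 ≤ x) (hy : 1 ≤ y) : |x⁻¹ - y⁻¹| ≤ |x - y| := by
  have hx0 : (0:ℝ) < x := by linarith
  have hy0 : (0:ℝ) < y := by linarith
  have h : x⁻¹ - y⁻¹ = (y - x) / (x * y) := by field_simp
  rw [h, abs_div, abs_of_pos (by positivity : (0:ℝ) < x * y), abs_sub_comm]
  have h1 : (1:ℝ) ≤ x * y := by nlinarith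
  calc |x - y| / (x * y) ≤ |x - y| / 1 := by
        apply div_le_div_of_nonneg_left (abs_nonneg _) zero_lt_one h1
  _ = |x - y| := by rw [div_one]

include ha in
lemma approx (b : ℤ → ℤ) (hb1 : ∀ t : ℤ, 1 ≤ b t) (i : ℤ) (m r : ℕ) (hrm : r ≤ m)
    (hw : ∀ d : ℤ, d.natAbs ≤ r + 1 → b (i + d) = aZ a ((m:ℤ) + 2 + d)) :
    |lambdaZ b i - Lam a m| ≤ 8 * (2:ℝ)⁻¹ ^ r := by
  have hpos1a : Pos1 a := pos1_a ha
  -- sequences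
  set u : ℕ → ℤ := fun nn => b (i - nn) with hu_def
  set ub : ℕ → ℤ := fun nn => b (i - 1 - nn) with hub_def
  set v : ℕ → ℤ := fun nn => if nn = 0 then 0 else b (i + nn) with hv_def
  set vb : ℕ → ℤ := fun nn => b (i + 1 + nn) with hvb_def
  have hu_pos : Pos1 u := fun nn _ => hb1 _
  have hub_pos : Pos1 ub := fun nn _ => hb1 _
  have hv_pos : Pos1 v := by
    intro nn hnn
    rw [hv_def]
    simp only
    rw [if_neg (by omega)]
    exact hb1 _
  have hvb_pos : Pos1 vb := fun nn _ => hb1 _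
  -- decompositions
  have hshu : sh u = ub := by
    funext nn
    simp only [sh, hu_def, hub_def]
    congr 1
    push_cast
    ring
  have hshv : sh v = vb := by
    funext nn
    simp only [sh, hv_def, hvb_def]
    rw [if_neg (by omega)]
    congr 1
    push_cast
    ring
  have hcu : cfVal u = (b i : ℝ) + (cfVal ub)⁻¹ := by
    have := cfVal_head hu_pos
    rw [hshu] at this
    simpa [hu_def] using this
  have hcv : cfVal v = (cfVal vb)⁻¹ := by
    have := cfVal_head hv_pos
    rw [hshv] at this
    simpa [hv_def] using this
  -- window values
  have hbi : (b i : ℤ) = a (m + 2) := by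
    have h := hw 0 (by omega)
    rw [add_zero, add_zero] at h
    have h2 : ((m:ℤ) + 2).toNat = m + 2 := by omega
    rw [h, aZ, if_pos (by omega), h2]
  have hvb_eq : ∀ j : ℕ, j ≤ r → vb j = a (m + 3 + j) := by
    intro j hj
    have h := hw (1 + j) (by omega)
    rw [hvb_def]
    simp only
    have e1 : i + 1 + (j:ℤ) = i + (1 + j) := by ring
    have h2 : ((m:ℤ) + 2 + (1 + j)).toNat = m + 3 + j := by omega
    rw [e1, h, aZ, if_pos (by omega), h2]
  have hub_eq : ∀ j : ℕ, j ≤ r → ub j = vm a (m+1) j := by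
    intro j hj
    have h := hw (-1 - j) (by omega)
    rw [hub_def]
    simp only
    have e1 : i - 1 - (j:ℤ) = i + (-1 - j) := by ring
    have h2 : ((m:ℤ) + 2 + (-1 - j)).toNat = m + 1 - j := by omega
    rw [e1, h, aZ, if_pos (by omega), vm, if_pos (by omega), h2]
  -- estimates
  have est1 : |cfVal vb - A a (m+3)| ≤ 4 * (2:ℝ)⁻¹ ^ r := by
    apply cfVal_prefix hvb_pos (pos1_tail (m+3) (fun nn hnn => (ha nn hnn).1))
    intro j hj
    rw [hvb_eq j hj]
  have hmirror : X (vm a (m+1)) m = (cfDen a (m+1) : ℝ) / (cfDen a m : ℝ) :=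
    mirror hpos1a m
  have hvm_pos : Pos1 (vm a (m+1)) := vm_pos1 hpos1a (m+1) (by omega)
  have est2 : |cfVal ub - X (vm a (m+1)) m| ≤ 4 * (2:ℝ)⁻¹ ^ r := by
    have e1 : |cfVal ub - X ub r| ≤ 2 * (2:ℝ)⁻¹ ^ r := cfVal_sub_X hub_pos r
    have e2 : X ub r = X (vm a (m+1)) r := X_congr (fun j hj => hub_eq j hj)
    have e3 : |X (vm a (m+1)) m - X (vm a (m+1)) r| ≤ 2 * (2:ℝ)⁻¹ ^ r := X_to_X hvm_pos hrm
    calc |cfVal ub - X (vm a (m+1)) m|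
        ≤ |cfVal ub - X ub r| + |X (vm a (m+1)) r - X (vm a (m+1)) m| := by
          rw [e2] at *
          have := abs_sub_le (cfVal ub) (X (vm a (m+1)) r) (X (vm a (m+1)) m)
          linarith
    _ ≤ 2 * (2:ℝ)⁻¹ ^ r + 2 * (2:ℝ)⁻¹ ^ r := by
          rw [abs_sub_comm] at e3
          linarith
    _ = 4 * (2:ℝ)⁻¹ ^ r := by ring
  -- lower bounds for inverses
  have hub_ge : (1:ℝ) ≤ cfVal ub := by
    have h := cfVal_ge hub_pos (by simpa [hub_def] using le_trans zero_le_one (hb1 (i - 1 - 0)))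
    have h1 : (1:ℝ) ≤ ((ub 0 : ℤ) : ℝ) := by exact_mod_cast hb1 (i - 1 - (0:ℕ))
    linarith
  have hvb_ge : (1:ℝ) ≤ cfVal vb := by
    have h := cfVal_ge hvb_pos (by simpa [hvb_def] using le_trans zero_le_one (hb1 (i + 1 + 0)))
    have h1 : (1:ℝ) ≤ ((vb 0 : ℤ) : ℝ) := by exact_mod_cast hb1 (i + 1 + (0:ℕ))
    linarith
  have hX_ge : (1:ℝ) ≤ X (vm a (m+1)) m := by
    rw [hmirror]
    rw [le_div_iff₀ (den_pos_real hpos1a m), one_mul]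
    exact_mod_cast den_mono hpos1a m
  have hA_ge : (1:ℝ) ≤ A a (m+3) := A_ge_one ha (m+3) (by omega)
  -- assemble
  have hLam : Lam a m = (a (m+2) : ℝ) + (X (vm a (m+1)) m)⁻¹ + (A a (m+3))⁻¹ := by
    rw [Lam, A_head ha (m+2), hmirror, inv_div]
    simp only [show m + 2 + 1 = m + 3 from rfl]
    ring
  have hlam : lambdaZ b i = (a (m+2) : ℝ) + (cfVal ub)⁻¹ + (cfVal vb)⁻¹ := by
    have : lambdaZ b i = cfVal u + cfVal v := rfl
    rw [this, hcu, hcv, hbi]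
  rw [hlam, hLam]
  have d1 : |(cfVal ub)⁻¹ - (X (vm a (m+1)) m)⁻¹| ≤ 4 * (2:ℝ)⁻¹ ^ r :=
    le_trans (inv_diff hub_ge hX_ge) est2
  have d2 : |(cfVal vb)⁻¹ - (A a (m+3))⁻¹| ≤ 4 * (2:ℝ)⁻¹ ^ r :=
    le_trans (inv_diff hvb_ge hA_ge) est1
  calc |(a (m+2) : ℝ) + (cfVal ub)⁻¹ + (cfVal vb)⁻¹ -
        ((a (m+2) : ℝ) + (X (vm a (m+1)) m)⁻¹ + (A a (m+3))⁻¹)|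
      = |((cfVal ub)⁻¹ - (X (vm a (m+1)) m)⁻¹) + ((cfVal vb)⁻¹ - (A a (m+3))⁻¹)| := by
        ring_nf
  _ ≤ |(cfVal ub)⁻¹ - (X (vm a (m+1)) m)⁻¹| + |(cfVal vb)⁻¹ - (A a (m+3))⁻¹| := abs_add_le _ _
  _ ≤ 4 * (2:ℝ)⁻¹ ^ r + 4 * (2:ℝ)⁻¹ ^ r := by linarith
  _ = 8 * (2:ℝ)⁻¹ ^ r := by ring

end approxsec
end CFMain


open CFAux CFAux2 CFAux3 CFAux4 CFMain Filter in
theorem stmt8_aux (α : ℝ) (a : ℕ → ℤ) (h0 : a 0 = 0)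
    (c : ℤ) (ha : ∀ n, 1 ≤ n → 1 ≤ a n ∧ a n ≤ c) (hα : α = cfVal a) :
    ∃ b : ℤ → ℤ, (∀ i, 1 ≤ b i) ∧ WeaklyAssoc b a ∧
      lagrangeConst α = lambdaZ b 0 ∧ lambdaZ b 0 = MZ b := by
  classical
  have hc : (1:ℤ) ≤ c := le_trans (ha 1 le_rfl).1 (ha 1 le_rfl).2
  obtain ⟨n, hnmono, hntend⟩ := exists_subseq ha
  have hnk : ∀ k, k ≤ n k := fun k => hnmono.le_apply
  obtain ⟨σ, hinf, hsub, hici, hcst⟩ := exists_sigma (a := a) (c := c) hc n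
  have hnest : ∀ i j : ℕ, j ≤ i → σ i ⊆ σ j := by
    intro i
    induction i with
    | zero => intro j hj; rw [Nat.le_zero.mp hj]
    | succ i ih =>
      intro j hj
      rcases Nat.lt_or_ge j (i+1) with h' | h'
      · exact subset_trans (hsub i) (ih j (by omega))
      · have : j = i + 1 := by omega
        rw [this]
  -- the doubly infinite sequence
  choose kk hkk using fun i => (hinf i).nonempty
  set b : ℤ → ℤ := fun t => aZ a ((n (kk t.natAbs) : ℤ) + 2 + t) with hb_def
  have hb1 : ∀ t, 1 ≤ b t := fun t => aZ_pos ha _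
  -- window constancy
  have hW_eq : ∀ (i : ℕ) (k k' : ℕ), k ∈ σ i → k' ∈ σ i → ∀ t : ℤ, t.natAbs ≤ i →
      aZ a ((n k : ℤ) + 2 + t) = aZ a ((n k' : ℤ) + 2 + t) := by
    intro i k k' hk hk' t ht
    have hki : i ≤ k := hici i hk
    have hki' : i ≤ k' := hici i hk'
    have hpat := congrFun (hcst i k hk k' hk') ⟨(t + i).toNat, by omega⟩
    have hval := congrArg Subtype.val hpat
    simp only [patmap] at hval
    have hX : (((⟨(t + i).toNat, by omega⟩ : Fin (2*i+1)) : ℤ)) = t + (i:ℤ) := by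
      simp only [Fin.val_mk]
      omega
    rw [hX] at hval
    have e1 : t + (i:ℤ) - (i:ℤ) = t := by ring
    rw [e1] at hval
    have hv1 : 1 ≤ (n k : ℤ) + 2 + t := by
      have := hnk k; omega
    have hv2 : 1 ≤ (n k' : ℤ) + 2 + t := by
      have := hnk k'; omega
    have m1 := aZ_mem ha _ hv1
    have m2 := aZ_mem ha _ hv2
    rwa [clamp_eq _ m1.1 m1.2, clamp_eq _ m2.1 m2.2] at hval
  have hb_win : ∀ (i : ℕ) (k : ℕ), k ∈ σ i → ∀ t : ℤ, t.natAbs ≤ i →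
      b t = aZ a ((n k : ℤ) + 2 + t) := by
    intro i k hk t ht
    rw [hb_def]
    exact hW_eq t.natAbs (kk t.natAbs) k (hkk t.natAbs) (hnest i t.natAbs ht hk) t le_rfl
  -- the approximation bound
  have happrox : ∀ (i : ℤ) (r k : ℕ), k ∈ σ (r + 1 + i.natAbs) → ∀ m : ℕ,
      (m : ℤ) = (n k : ℤ) + i → |lambdaZ b i - Lam a m| ≤ 8 * (2:ℝ)⁻¹ ^ r := by
    intro i r k hk m hm
    have hki : r + 1 + i.natAbs ≤ k := hici _ hk
    have hkn := hnk k
    apply approx ha b hb1 i m r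
    · omega
    · intro d hd
      have h := hb_win (r + 1 + i.natAbs) k hk (i + d) (by omega)
      rw [h]
      congr 1
      omega
  -- λ₀(B) = LL a
  have hL1 := LL_ge_one ha
  have half_lt : ∀ ε : ℝ, 0 < ε → ∃ r : ℕ, 8 * (2:ℝ)⁻¹ ^ r < ε := by
    intro ε hε
    rcases exists_pow_lt_of_lt_one (show (0:ℝ) < ε/8 by linarith) (by norm_num : (2:ℝ)⁻¹ < 1)
      with ⟨r, hr⟩
    exact ⟨r, by linarith⟩
  have hlam0 : lambdaZ b 0 = LL a := by
    have key : ∀ ε : ℝ, 0 < ε → |lambdaZ b 0 - LL a| ≤ ε := by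
      intro ε hε
      rcases half_lt (ε/2) (by linarith) with ⟨r, hr⟩
      rcases Metric.tendsto_atTop.mp hntend (ε/2) (by linarith) with ⟨K, hK⟩
      rcases (hinf (r + 1 + (0:ℤ).natAbs)).exists_gt K with ⟨k, hk, hkK⟩
      have hkn := hnk k
      have happ := happrox 0 r k hk (n k) (by push_cast; ring)
      have hdist := hK k (le_of_lt hkK)
      rw [Real.dist_eq] at hdist
      calc |lambdaZ b 0 - LL a| ≤ |lambdaZ b 0 - Lam a (n k)| + |Lam a (n k) - LL a| :=
            abs_sub_le _ _ _
      _ ≤ 8 * (2:ℝ)⁻¹ ^ r + |Lam a (n k) - LL a| := by linarith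
      _ ≤ ε/2 + ε/2 := by linarith
      _ = ε := by ring
    have h1 : |lambdaZ b 0 - LL a| ≤ 0 := by
      by_contra hcon
      push_neg at hcon
      have := key (|lambdaZ b 0 - LL a|/2) (by linarith)
      linarith
    have := abs_nonneg (lambdaZ b 0 - LL a)
    have h2 : lambdaZ b 0 - LL a = 0 := by
      rw [← abs_eq_zero]; linarith
    linarith
  -- all λᵢ(B) ≤ LL a
  have hlami : ∀ i : ℤ, lambdaZ b i ≤ LL a := by
    intro i
    apply le_of_forall_pos_le_add
    intro ε hε
    rcases half_lt (ε/2) (by linarith) with ⟨r, hr⟩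
    have hev : ∀ᶠ m in atTop, Lam a m < LL a + ε/2 :=
      eventually_lt_of_limsup_lt (by rw [LL] at *; linarith) (Lam_bddAbove ha)
    rcases eventually_atTop.mp hev with ⟨N, hN⟩
    rcases (hinf (r + 1 + i.natAbs)).exists_gt (N + i.natAbs) with ⟨k, hk, hkN⟩
    have hki : r + 1 + i.natAbs ≤ k := hici _ hk
    have hkn := hnk k
    set m : ℕ := ((n k : ℤ) + i).toNat with hm_def
    have hm : (m : ℤ) = (n k : ℤ) + i := by omega
    have happ := happrox i r k hk m hm
    have hmN : N ≤ m := by omega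
    have hLam_m := hN m hmN
    have := abs_sub_le_iff.mp happ
    linarith [this.1]
  -- conclusion
  refine ⟨b, hb1, ?_, ?_, ?_⟩
  · -- weakly associated
    intro i
    rw [frequently_atTop]
    intro N
    rcases (hinf i).exists_gt (N + i) with ⟨k, hk, hkN⟩
    have hki : i ≤ k := hici i hk
    have hkn := hnk k
    refine ⟨n k + 1 - i, by omega, ?_⟩
    intro j hj
    have h := hb_win i k hk ((j:ℤ) - (i:ℤ)) (by omega)
    rw [h, aZ, if_pos (by omega)]
    congr 1
    omega
  · rw [lagrange_eq h0 ha hα, hlam0]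
  · apply le_antisymm
    · have hbdd : BddAbove (Set.range fun i : ℤ => lambdaZ b i) := by
        refine ⟨LL a, ?_⟩
        rintro x ⟨i, rfl⟩
        exact hlami i
      exact le_ciSup hbdd 0
    · apply ciSup_le
      intro i
      rw [hlam0]
      exact hlami i


/-- Every irrational `α = [0; a 1, a 2, ...]` with partial quotients bounded by `c` has a
strongly associated doubly infinite sequence `B`: `B` is weakly associated with `α` and
`μ(α) = λ_0(B) = M(B)`. -/
theorem stmt8 (α : ℝ) (hirr : Irrational α) (a : ℕ → ℤ) (h0 : a 0 = 0)
    (c : ℤ) (ha : ∀ n, 1 ≤ n → 1 ≤ a n ∧ a n ≤ c) (hα : α = cfVal a) :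
    ∃ b : ℤ → ℤ, (∀ i, 1 ≤ b i) ∧ WeaklyAssoc b a ∧
      lagrangeConst α = lambdaZ b 0 ∧ lambdaZ b 0 = MZ b :=
  stmt8_aux α a h0 c ha hα
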